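/- Let (γ, τ) be a twisted coaction of a bimonoid B on a monoid A in a braided monoidal category 𝒱, and define z := ((j⊗1_B)∘λ_B⁻¹)•γ : B⊗A → A⊗B, d := (((j⊗Δ)∘λ_B⁻¹)•τ)∘ρ_B⁻¹ : B → A⊗B⊗B, and w := j∘ε_B : B → A (the composite B → I → A). Then the three counit equations of a mixed opwreath hold: (iii) m ∘ (1_A⊗w) ∘ z = m ∘ (w⊗1_A) : B⊗A → A; (vi) (m⊗1_B) ∘ (1_A⊗w⊗1_B) ∘ d = (j⊗1_B) ∘ λ_B⁻¹ : B → A⊗B; (vii) (m⊗1_B) ∘ (1_A⊗z) ∘ (1_{A⊗B}⊗w) ∘ d = (j⊗1_B) ∘ λ_B⁻¹ : B → A⊗B. -/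

import Mathlib

open CategoryTheory MonoidalCategory

variable {𝒱 : Type*} [Category 𝒱] [MonoidalCategory 𝒱] [BraidedCategory 𝒱]

/-- The multiplication of the braided tensor product of two monoids `(X, mX)` and
`(Y, mY)`: `(mX ⊗ mY) ∘ (1_X ⊗ σ_{Y,X} ⊗ 1_Y)`, written with explicit associators. -/
def tensorMul (X Y : 𝒱) (mX : X ⊗ X ⟶ X) (mY : Y ⊗ Y ⟶ Y) :
    (X ⊗ Y) ⊗ (X ⊗ Y) ⟶ X ⊗ Y :=
  (α_ X Y (X ⊗ Y)).hom ≫ (X ◁ (α_ Y X Y).inv) ≫ (X ◁ ((β_ Y X).hom ▷ Y)) ≫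
    (X ◁ (α_ X Y Y).hom) ≫ (α_ X X (Y ⊗ Y)).inv ≫ (mX ⊗ₘ mY)

/-- The map `z := ((j ⊗ 1_B) ∘ λ_B⁻¹) • γ : B ⊗ A ⟶ A ⊗ B` built from a twisted
coaction `γ`; the dot product is taken in the braided tensor-product monoid `A ⊗ B`. -/
def zMap (A B : 𝒱) (m : A ⊗ A ⟶ A) (j : 𝟙_ 𝒱 ⟶ A) (mB : B ⊗ B ⟶ B)
    (γ : A ⟶ A ⊗ B) : B ⊗ A ⟶ A ⊗ B :=
  (((λ_ B).inv ≫ (j ▷ B)) ⊗ₘ γ) ≫ tensorMul A B m mB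

/-- The map `d := (((j ⊗ₘ Δ) ∘ λ_B⁻¹) • τ) ∘ ρ_B⁻¹ : B ⟶ (A ⊗ B) ⊗ B` built from a twisted
coaction `(γ, τ)`; the dot product is taken in the braided tensor-product monoid
`(A ⊗ B) ⊗ B`. -/
def dMap (A B : 𝒱) (m : A ⊗ A ⟶ A) (j : 𝟙_ 𝒱 ⟶ A) (mB : B ⊗ B ⟶ B)
    (Δ : B ⟶ B ⊗ B) (τ : 𝟙_ 𝒱 ⟶ (A ⊗ B) ⊗ B) : B ⟶ (A ⊗ B) ⊗ B :=
  (ρ_ B).inv ≫ (((λ_ B).inv ≫ (j ⊗ₘ Δ) ≫ (α_ A B B).inv) ⊗ₘ τ) ≫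
    tensorMul (A ⊗ B) B (tensorMul A B m mB) mB


section AuxTwisted

lemma tensorMul_eq (X Y : 𝒱) (mX : X ⊗ X ⟶ X) (mY : Y ⊗ Y ⟶ Y) :
    tensorMul X Y mX mY = tensorμ X Y X Y ≫ (mX ⊗ₘ mY) := by
  rw [tensorMul, tensorμ]; simp only [Category.assoc]

lemma aux_unit_tensorμ (X : 𝒱) (mX : X ⊗ X ⟶ X) :
    tensorμ X (𝟙_ 𝒱) X (𝟙_ 𝒱) ≫ (mX ⊗ₘ (λ_ (𝟙_ 𝒱)).hom) ≫ (ρ_ X).hom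
      = ((ρ_ X).hom ⊗ₘ (ρ_ X).hom) ≫ mX := by
  have hb : (β_ (𝟙_ 𝒱) X).hom = (λ_ X).hom ≫ (ρ_ X).inv := by simp
  rw [tensorμ, hb]
  monoidal

lemma aux_counit_collapse (X B : 𝒱) (mX : X ⊗ X ⟶ X) (mB : B ⊗ B ⟶ B) (εB : B ⟶ 𝟙_ 𝒱)
    (h : mB ≫ εB = (εB ⊗ₘ εB) ≫ (λ_ (𝟙_ 𝒱)).hom) :
    tensorMul X B mX mB ≫ (X ◁ εB) ≫ (ρ_ X).hom
      = (((X ◁ εB) ≫ (ρ_ X).hom) ⊗ₘ ((X ◁ εB) ≫ (ρ_ X).hom)) ≫ mX := by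
  rw [tensorMul_eq]
  have h1 : (mX ⊗ₘ mB) ≫ (X ◁ εB) = ((𝟙 X ⊗ₘ 𝟙 X) ⊗ₘ (εB ⊗ₘ εB)) ≫ (mX ⊗ₘ (λ_ (𝟙_ 𝒱)).hom) := by
    rw [← id_tensorHom, tensorHom_comp_tensorHom, Category.comp_id, h, tensorHom_comp_tensorHom]
    simp
  rw [Category.assoc, reassoc_of% h1, ← tensorμ_natural_assoc (𝟙 X) εB (𝟙 X) εB,
    aux_unit_tensorμ]
  rw [tensorHom_comp_tensorHom_assoc]
  simp

lemma aux_functorial (X X' Y : 𝒱) (mX : X ⊗ X ⟶ X) (mX' : X' ⊗ X' ⟶ X') (mY : Y ⊗ Y ⟶ Y)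
    (f : X ⟶ X') (hf : mX ≫ f = (f ⊗ₘ f) ≫ mX') :
    tensorMul X Y mX mY ≫ (f ▷ Y) = ((f ▷ Y) ⊗ₘ (f ▷ Y)) ≫ tensorMul X' Y mX' mY := by
  rw [tensorMul_eq, tensorMul_eq, ← tensorHom_id f Y]
  rw [tensorμ_natural_assoc f (𝟙 Y) f (𝟙 Y)]
  simp only [Category.assoc, tensorHom_comp_tensorHom, ← hf, id_tensorHom_id,
    Category.id_comp, Category.comp_id]

lemma aux_right_unit (X Y : 𝒱) (mX : X ⊗ X ⟶ X) (mY : Y ⊗ Y ⟶ Y)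
    (jX : 𝟙_ 𝒱 ⟶ X) (jY : 𝟙_ 𝒱 ⟶ Y)
    (hX : (X ◁ jX) ≫ mX = (ρ_ X).hom) (hY : (Y ◁ jY) ≫ mY = (ρ_ Y).hom) :
    ((X ⊗ Y) ◁ ((λ_ (𝟙_ 𝒱)).inv ≫ (jX ⊗ₘ jY))) ≫ tensorMul X Y mX mY
      = (ρ_ (X ⊗ Y)).hom := by
  rw [tensorMul_eq, MonoidalCategory.whiskerLeft_comp, Category.assoc,
    tensorμ_natural_right_assoc, tensorHom_comp_tensorHom, hX, hY, ← tensor_right_unitality]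

lemma aux_fin (X Y W : 𝒱) (mX : X ⊗ X ⟶ X) (mY : Y ⊗ Y ⟶ Y)
    (jX : 𝟙_ 𝒱 ⟶ X) (jY : 𝟙_ 𝒱 ⟶ Y) (f : W ⟶ X ⊗ Y)
    (hX : (X ◁ jX) ≫ mX = (ρ_ X).hom) (hY : (Y ◁ jY) ≫ mY = (ρ_ Y).hom) :
    (ρ_ W).inv ≫ (f ⊗ₘ ((λ_ (𝟙_ 𝒱)).inv ≫ (jX ⊗ₘ jY))) ≫ tensorMul X Y mX mY = f := by
  rw [MonoidalCategory.tensorHom_def]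
  simp only [Category.assoc]
  rw [← rightUnitor_inv_naturality_assoc, aux_right_unit X Y mX mY jX jY hX hY]
  simp

end AuxTwisted

/-- For a twisted coaction `(γ, τ)` of a bimonoid `B` on a monoid `A`
in a braided monoidal category, with `z := ((j ⊗ 1_B) ∘ λ_B⁻¹) • γ`,
`d := (((j ⊗ₘ Δ) ∘ λ_B⁻¹) • τ) ∘ ρ_B⁻¹` and `w := j ∘ ε_B`, the three counit equations
(iii), (vi) and (vii) of a mixed opwreath hold. -/
theorem twisted_coaction_counit_equations
    (A B : 𝒱) (m : A ⊗ A ⟶ A) (j : 𝟙_ 𝒱 ⟶ A)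
    (mB : B ⊗ B ⟶ B) (jB : 𝟙_ 𝒱 ⟶ B) (Δ : B ⟶ B ⊗ B) (εB : B ⟶ 𝟙_ 𝒱)
    -- `A` is a monoid
    (hA_assoc : (m ▷ A) ≫ m = (α_ A A A).hom ≫ (A ◁ m) ≫ m)
    (hA_one_mul : (j ▷ A) ≫ m = (λ_ A).hom)
    (hA_mul_one : (A ◁ j) ≫ m = (ρ_ A).hom)
    -- `B` is a monoid
    (hB_assoc : (mB ▷ B) ≫ mB = (α_ B B B).hom ≫ (B ◁ mB) ≫ mB)
    (hB_one_mul : (jB ▷ B) ≫ mB = (λ_ B).hom)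
    (hB_mul_one : (B ◁ jB) ≫ mB = (ρ_ B).hom)
    -- `B` is a comonoid
    (hB_coassoc : Δ ≫ (Δ ▷ B) ≫ (α_ B B B).hom = Δ ≫ (B ◁ Δ))
    (hB_counit_left : Δ ≫ (εB ▷ B) ≫ (λ_ B).hom = 𝟙 B)
    (hB_counit_right : Δ ≫ (B ◁ εB) ≫ (ρ_ B).hom = 𝟙 B)
    -- `B` is a bimonoid: `Δ` and `εB` are monoid morphisms
    (hB_compat_mul : mB ≫ Δ = (Δ ⊗ₘ Δ) ≫ tensorMul B B mB mB)
    (hB_compat_one : jB ≫ Δ = (λ_ (𝟙_ 𝒱)).inv ≫ (jB ⊗ₘ jB))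
    (hB_counit_mul : mB ≫ εB = (εB ⊗ₘ εB) ≫ (λ_ (𝟙_ 𝒱)).hom)
    (hB_counit_one : jB ≫ εB = 𝟙 (𝟙_ 𝒱))
    -- twisted coaction data: `γ` is a monoid morphism, `τ` a normalized `2`-cocycle
    (γ : A ⟶ A ⊗ B) (τ : 𝟙_ 𝒱 ⟶ (A ⊗ B) ⊗ B)
    (hγ_mul : m ≫ γ = (γ ⊗ₘ γ) ≫ tensorMul A B m mB)
    (hγ_one : j ≫ γ = (λ_ (𝟙_ 𝒱)).inv ≫ (j ⊗ₘ jB))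
    (hcounital : γ ≫ (A ◁ εB) ≫ (ρ_ A).hom = 𝟙 A)
    (hτ_coassoc :
      (λ_ A).inv ≫ (τ ⊗ₘ (γ ≫ (γ ▷ B))) ≫ tensorMul (A ⊗ B) B (tensorMul A B m mB) mB
        = (ρ_ A).inv ≫ ((γ ≫ (A ◁ Δ) ≫ (α_ A B B).inv) ⊗ₘ τ) ≫
            tensorMul (A ⊗ B) B (tensorMul A B m mB) mB)
    (hcocycle :
      (λ_ (𝟙_ 𝒱)).inv ≫
          ((τ ≫ ((A ◁ Δ) ▷ B) ≫ ((α_ A B B).inv ▷ B)) ⊗ₘ ((λ_ (𝟙_ 𝒱)).inv ≫ (τ ⊗ₘ jB))) ≫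
          tensorMul ((A ⊗ B) ⊗ B) B (tensorMul (A ⊗ B) B (tensorMul A B m mB) mB) mB
        = (λ_ (𝟙_ 𝒱)).inv ≫
          ((τ ≫ ((A ⊗ B) ◁ Δ) ≫ (α_ (A ⊗ B) B B).inv) ⊗ₘ (τ ≫ ((γ ▷ B) ▷ B))) ≫
          tensorMul ((A ⊗ B) ⊗ B) B (tensorMul (A ⊗ B) B (tensorMul A B m mB) mB) mB)
    (hnormal₁ : τ ≫ ((A ⊗ B) ◁ εB) ≫ (ρ_ (A ⊗ B)).hom = (λ_ (𝟙_ 𝒱)).inv ≫ (j ⊗ₘ jB))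
    (hnormal₂ : τ ≫ ((A ◁ εB) ▷ B) ≫ ((ρ_ A).hom ▷ B) = (λ_ (𝟙_ 𝒱)).inv ≫ (j ⊗ₘ jB)) :
    (zMap A B m j mB γ ≫ (A ◁ (εB ≫ j)) ≫ m = ((εB ≫ j) ▷ A) ≫ m) ∧
    (dMap A B m j mB Δ τ ≫ ((A ◁ (εB ≫ j)) ▷ B) ≫ (m ▷ B) = (λ_ B).inv ≫ (j ▷ B)) ∧
    (dMap A B m j mB Δ τ ≫ ((A ⊗ B) ◁ (εB ≫ j)) ≫ (α_ A B A).hom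
        ≫ (A ◁ zMap A B m j mB γ) ≫ (α_ A A B).inv ≫ (m ▷ B)
      = (λ_ B).inv ≫ (j ▷ B)) := by
  have hw : (A ◁ (εB ≫ j)) ≫ m = (A ◁ εB) ≫ (ρ_ A).hom := by
    rw [MonoidalCategory.whiskerLeft_comp, Category.assoc, hA_mul_one]
  have hc : γ ≫ (A ◁ εB) ≫ (ρ_ A).hom = 𝟙 A := hcounital
  have hS0 : ((λ_ B).inv ≫ (j ▷ B)) ≫ (A ◁ εB) ≫ (ρ_ A).hom = εB ≫ j := by
    simp only [Category.assoc, ← whisker_exchange_assoc]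
    simp [← unitors_equal]
  have hL1A := aux_counit_collapse A B m mB εB hB_counit_mul
  refine ⟨?_, ?_, ?_⟩
  · -- (iii)
    rw [hw, zMap, Category.assoc, hL1A, tensorHom_comp_tensorHom_assoc, hc, hS0, tensorHom_id]
  · -- (vi)
    rw [← comp_whiskerRight, hw, dMap]
    simp only [Category.assoc]
    rw [aux_functorial (A ⊗ B) A B (tensorMul A B m mB) m mB ((A ◁ εB) ≫ (ρ_ A).hom) hL1A,
      tensorHom_comp_tensorHom_assoc]
    have hτ2 : τ ≫ (((A ◁ εB) ≫ (ρ_ A).hom) ▷ B) = (λ_ (𝟙_ 𝒱)).inv ≫ (j ⊗ₘ jB) := by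
      rw [comp_whiskerRight]
      simpa using hnormal₂
    have hg1 : ((λ_ B).inv ≫ (j ⊗ₘ Δ) ≫ (α_ A B B).inv) ≫ (((A ◁ εB) ≫ (ρ_ A).hom) ▷ B)
        = (λ_ B).inv ≫ (j ▷ B) := by
      rw [comp_whiskerRight, MonoidalCategory.tensorHom_def]
      simp only [Category.assoc]
      have e2 : (A ◁ Δ) ≫ (α_ A B B).inv ≫ ((A ◁ εB) ▷ B) ≫ ((ρ_ A).hom ▷ B)
          = A ◁ (Δ ≫ (εB ▷ B) ≫ (λ_ B).hom) := by monoidal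
      rw [e2, hB_counit_left]
      simp
    rw [hg1, hτ2]
    exact aux_fin A B B m mB j jB ((λ_ B).inv ≫ (j ▷ B)) hA_mul_one hB_mul_one
  · -- (vii)
    have Z1 : (B ◁ j) ≫ zMap A B m j mB γ = (ρ_ B).hom ≫ (λ_ B).inv ≫ (j ▷ B) := by
      rw [zMap, ← id_tensorHom, tensorHom_comp_tensorHom_assoc, Category.id_comp, hγ_one]
      conv_rhs => rw [← aux_fin A B B m mB j jB ((λ_ B).inv ≫ (j ▷ B)) hA_mul_one hB_mul_one,
        Iso.hom_inv_id_assoc]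
    have Z2 : ((A ⊗ B) ◁ j) ≫ (α_ A B A).hom ≫ (A ◁ zMap A B m j mB γ) ≫
        (α_ A A B).inv ≫ (m ▷ B) = (ρ_ (A ⊗ B)).hom := by
      have e3 : ((A ⊗ B) ◁ j) ≫ (α_ A B A).hom ≫ (A ◁ zMap A B m j mB γ)
          = (α_ A B (𝟙_ 𝒱)).hom ≫ (A ◁ ((B ◁ j) ≫ zMap A B m j mB γ)) := by monoidal
      rw [reassoc_of% e3, Z1]
      simp only [MonoidalCategory.whiskerLeft_comp, Category.assoc]
      have e4 : A ◁ (j ▷ B) ≫ (α_ A A B).inv ≫ (m ▷ B)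
          = (α_ A (𝟙_ 𝒱) B).inv ≫ (((A ◁ j) ≫ m) ▷ B) := by monoidal
      rw [e4, hA_mul_one]
      monoidal
    rw [MonoidalCategory.whiskerLeft_comp, Category.assoc, Z2, dMap]
    simp only [Category.assoc]
    rw [aux_counit_collapse (A ⊗ B) B (tensorMul A B m mB) mB εB hB_counit_mul,
      tensorHom_comp_tensorHom_assoc]
    have hτ1 : τ ≫ ((A ⊗ B) ◁ εB) ≫ (ρ_ (A ⊗ B)).hom = (λ_ (𝟙_ 𝒱)).inv ≫ (j ⊗ₘ jB) :=
      hnormal₁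
    have hg2 : ((λ_ B).inv ≫ (j ⊗ₘ Δ) ≫ (α_ A B B).inv) ≫ ((A ⊗ B) ◁ εB) ≫ (ρ_ (A ⊗ B)).hom
        = (λ_ B).inv ≫ (j ▷ B) := by
      rw [MonoidalCategory.tensorHom_def]
      simp only [Category.assoc]
      have e5 : (A ◁ Δ) ≫ (α_ A B B).inv ≫ ((A ⊗ B) ◁ εB) ≫ (ρ_ (A ⊗ B)).hom
          = A ◁ (Δ ≫ (B ◁ εB) ≫ (ρ_ B).hom) := by monoidal
      rw [e5, hB_counit_right]
      simp
    rw [hg2, hτ1]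
    exact aux_fin A B B m mB j jB ((λ_ B).inv ≫ (j ▷ B)) hA_mul_one hB_mul_one
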